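/- The kernel of H_prop equals { Σ_{t=0}^{N} (U_t⋯U₁ α) ⊗ |t⟩ : α ∈ ℂ^D } (where the empty product for t = 0 is the identity), and there exists a universal constant c > 0 such that the smallest nonzero eigenvalue of H_prop is at least c/N². -/

import Mathlib

open Matrix Kronecker

noncomputable section

/-- The smallest nonzero eigenvalue of a matrix `M` (as an infimum over the set of nonzero
real eigenvalues). -/
def gammaM {ι : Type*} [Fintype ι] [DecidableEq ι] (M : Matrix ι ι ℂ) : ℝ :=
  sInf {r : ℝ | r ≠ 0 ∧ ∃ w : ι → ℂ, w ≠ 0 ∧ M.mulVec w = (r : ℂ) • w}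

/-- `prodU D U t = U_t ⋯ U₁` (the empty product for `t = 0` being the identity). -/
def prodU (D : ℕ) (U : ℕ → Matrix (Fin D) (Fin D) ℂ) : ℕ → Matrix (Fin D) (Fin D) ℂ
  | 0 => 1
  | k + 1 => U (k + 1) * prodU D U k

/-- Kitaev's propagation Hamiltonian on `ℂ^D ⊗ ℂ^{N+1}`:
`H_prop = Σ_{j=1}^{N} [(1/2)·I ⊗ (|j⟩⟨j| + |j−1⟩⟨j−1|) − (1/2)·U_j ⊗ |j⟩⟨j−1|
− (1/2)·U_j† ⊗ |j−1⟩⟨j|]`. -/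
def Hprop (D N : ℕ) (U : ℕ → Matrix (Fin D) (Fin D) ℂ) :
    Matrix (Fin D × Fin (N + 1)) (Fin D × Fin (N + 1)) ℂ :=
  ∑ j : Fin N,
    ((1 / 2 : ℂ) • ((1 : Matrix (Fin D) (Fin D) ℂ) ⊗ₖ
        (Matrix.single j.succ j.succ (1 : ℂ) +
          Matrix.single j.castSucc j.castSucc (1 : ℂ))) -
      (1 / 2 : ℂ) • (U (j.val + 1) ⊗ₖ Matrix.single j.succ j.castSucc (1 : ℂ)) -
      (1 / 2 : ℂ) • ((U (j.val + 1))ᴴ ⊗ₖ Matrix.single j.castSucc j.succ (1 : ℂ)))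

namespace Stmt8Aux

variable {D N : ℕ}

/-! ### Generic small lemmas -/

lemma sum_mulVec {m n ι : Type*} [Fintype n]
    (s : Finset ι) (M : ι → Matrix m n ℂ) (v : n → ℂ) :
    (∑ j ∈ s, M j) *ᵥ v = ∑ j ∈ s, M j *ᵥ v :=
  map_sum (Matrix.mulVec.addMonoidHomLeft v) M s

lemma dotProduct_sum {n ι : Type*} [Fintype n] (s : Finset ι) (u : n → ℂ) (f : ι → n → ℂ) :
    u ⬝ᵥ (∑ j ∈ s, f j) = ∑ j ∈ s, u ⬝ᵥ f j := by
  simp only [dotProduct, Finset.sum_apply, Finset.mul_sum]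
  exact Finset.sum_comm

/-- squared norm of a complex vector -/
def Qv {ι : Type*} [Fintype ι] (x : ι → ℂ) : ℝ := ∑ i, Complex.normSq (x i)

lemma Qv_nonneg {ι : Type*} [Fintype ι] (x : ι → ℂ) : 0 ≤ Qv x :=
  Finset.sum_nonneg fun _ _ => Complex.normSq_nonneg _

lemma star_dot_self {ι : Type*} [Fintype ι] (x : ι → ℂ) : star x ⬝ᵥ x = (Qv x : ℂ) := by
  simp [dotProduct, Qv, Complex.normSq_eq_conj_mul_self]

lemma Qv_eq_zero_iff {ι : Type*} [Fintype ι] (x : ι → ℂ) : Qv x = 0 ↔ x = 0 := by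
  constructor
  · intro h
    funext i
    have := (Finset.sum_eq_zero_iff_of_nonneg (fun i _ => Complex.normSq_nonneg (x i))).1 h i
      (Finset.mem_univ i)
    simpa [Complex.normSq_eq_zero] using this
  · intro h; simp [h, Qv]

lemma unitary_mulVec_Qv (P : Matrix (Fin D) (Fin D) ℂ) (hP : P * Pᴴ = 1) (x : Fin D → ℂ) :
    Qv (Pᴴ *ᵥ x) = Qv x := by
  have : star (Pᴴ *ᵥ x) ⬝ᵥ (Pᴴ *ᵥ x) = star x ⬝ᵥ x := by
    rw [Matrix.star_mulVec, Matrix.conjTranspose_conjTranspose,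
      ← Matrix.dotProduct_mulVec, Matrix.mulVec_mulVec, hP, Matrix.one_mulVec]
  rw [star_dot_self, star_dot_self] at this
  exact_mod_cast this

lemma prodU_unitary (U : ℕ → Matrix (Fin D) (Fin D) ℂ)
    (hU : ∀ j, 1 ≤ j → j ≤ N → (U j)ᴴ * U j = 1 ∧ U j * (U j)ᴴ = 1) :
    ∀ t, t ≤ N → (prodU D U t)ᴴ * prodU D U t = 1 ∧ prodU D U t * (prodU D U t)ᴴ = 1 := by
  intro t
  induction t with
  | zero => intro _; simp [prodU]
  | succ k ih =>
    intro hk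
    obtain ⟨h1, h2⟩ := ih (by omega)
    obtain ⟨hu1, hu2⟩ := hU (k+1) (by omega) hk
    constructor
    · rw [prodU, Matrix.conjTranspose_mul, Matrix.mul_assoc, ← Matrix.mul_assoc (U (k+1))ᴴ,
        hu1, Matrix.one_mul, h1]
    · rw [prodU, Matrix.conjTranspose_mul, Matrix.mul_assoc, ← Matrix.mul_assoc (prodU D U k),
        h2, Matrix.one_mul, hu2]

/-! ### The decomposition `Hprop = (1/2) ∑ Cⱼᴴ Cⱼ` -/

def RM (N : ℕ) (t : Fin (N+1)) : Matrix (Fin 1) (Fin (N+1)) ℂ := Matrix.single 0 t 1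

lemma RM_conjT_mul (t t' : Fin (N+1)) : (RM N t)ᴴ * RM N t' = Matrix.single t t' 1 := by
  ext a b
  simp [RM, Matrix.mul_apply, Matrix.single, Matrix.conjTranspose_apply, eq_comm]
  aesop

lemma kron_conjT (A : Matrix (Fin D) (Fin D) ℂ) (B : Matrix (Fin 1) (Fin (N+1)) ℂ) :
    (A ⊗ₖ B)ᴴ = Aᴴ ⊗ₖ Bᴴ := by
  ext ⟨i, t⟩ ⟨i', t'⟩
  simp [Matrix.conjTranspose_apply, Matrix.kroneckerMap_apply, star_mul']

def Cmat (D N : ℕ) (U : ℕ → Matrix (Fin D) (Fin D) ℂ) (j : Fin N) :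
    Matrix (Fin D × Fin 1) (Fin D × Fin (N+1)) ℂ :=
  (1 : Matrix (Fin D) (Fin D) ℂ) ⊗ₖ RM N j.succ - U (j.val + 1) ⊗ₖ RM N j.castSucc

lemma Hprop_eq (U : ℕ → Matrix (Fin D) (Fin D) ℂ)
    (hU : ∀ j : Fin N, (U (j.val + 1))ᴴ * U (j.val + 1) = 1) :
    Hprop D N U = (1/2 : ℂ) • ∑ j : Fin N, (Cmat D N U j)ᴴ * Cmat D N U j := by
  rw [Hprop, Finset.smul_sum]
  refine Finset.sum_congr rfl fun j _ => ?_
  rw [Cmat, Matrix.conjTranspose_sub, kron_conjT, kron_conjT, Matrix.sub_mul, Matrix.mul_sub,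
    Matrix.mul_sub, ← Matrix.mul_kronecker_mul, ← Matrix.mul_kronecker_mul,
    ← Matrix.mul_kronecker_mul, ← Matrix.mul_kronecker_mul, RM_conjT_mul, RM_conjT_mul,
    RM_conjT_mul, RM_conjT_mul, Matrix.conjTranspose_one, Matrix.one_mul, Matrix.one_mul,
    Matrix.mul_one, hU j, Matrix.kronecker_add]
  module

lemma Hprop_isHermitian (U : ℕ → Matrix (Fin D) (Fin D) ℂ)
    (hU : ∀ j : Fin N, (U (j.val + 1))ᴴ * U (j.val + 1) = 1) :
    (Hprop D N U).IsHermitian := by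
  rw [Hprop_eq U hU]
  unfold Matrix.IsHermitian
  rw [Matrix.conjTranspose_smul, Matrix.conjTranspose_sum]
  congr 1
  · simp
  · refine Finset.sum_congr rfl fun j _ => ?_
    rw [Matrix.conjTranspose_mul, Matrix.conjTranspose_conjTranspose]

lemma Hprop_mulVec (U : ℕ → Matrix (Fin D) (Fin D) ℂ)
    (hU : ∀ j : Fin N, (U (j.val + 1))ᴴ * U (j.val + 1) = 1) (w : Fin D × Fin (N+1) → ℂ) :
    Hprop D N U *ᵥ w =
      (1/2 : ℂ) • ∑ j : Fin N, (Cmat D N U j)ᴴ *ᵥ (Cmat D N U j *ᵥ w) := by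
  rw [Hprop_eq U hU, Matrix.smul_mulVec, sum_mulVec]
  simp only [Matrix.mulVec_mulVec]

lemma quad_form (U : ℕ → Matrix (Fin D) (Fin D) ℂ)
    (hU : ∀ j : Fin N, (U (j.val + 1))ᴴ * U (j.val + 1) = 1) (w : Fin D × Fin (N+1) → ℂ) :
    star w ⬝ᵥ (Hprop D N U *ᵥ w) =
      (((1/2 * ∑ j : Fin N, Qv (Cmat D N U j *ᵥ w) : ℝ)) : ℂ) := by
  rw [Hprop_mulVec U hU w, dotProduct_smul, dotProduct_sum]
  have : ∀ j : Fin N, star w ⬝ᵥ ((Cmat D N U j)ᴴ *ᵥ (Cmat D N U j *ᵥ w))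
      = (Qv (Cmat D N U j *ᵥ w) : ℂ) := by
    intro j
    rw [Matrix.dotProduct_mulVec, ← Matrix.star_mulVec, star_dot_self]
  simp only [this]
  rw [smul_eq_mul]
  push_cast
  ring

/-! ### Action of `Cmat` -/

lemma kron_row_mulVec (A : Matrix (Fin D) (Fin D) ℂ) (t : Fin (N+1))
    (w : Fin D × Fin (N+1) → ℂ) (i : Fin D) (z : Fin 1) :
    ((A ⊗ₖ RM N t) *ᵥ w) (i, z) = (A *ᵥ fun i' => w (i', t)) i := by
  have hz : z = 0 := Subsingleton.elim _ _
  subst hz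
  simp [Matrix.mulVec, dotProduct, Fintype.sum_prod_type, RM, Matrix.single,
    Finset.mul_sum, mul_ite, ite_mul, eq_comm]

lemma Cmat_mulVec (U : ℕ → Matrix (Fin D) (Fin D) ℂ) (j : Fin N)
    (w : Fin D × Fin (N+1) → ℂ) (i : Fin D) (z : Fin 1) :
    (Cmat D N U j *ᵥ w) (i, z) =
      w (i, j.succ) - ((U (j.val + 1)) *ᵥ fun i' => w (i', j.castSucc)) i := by
  rw [Cmat, Matrix.sub_mulVec]
  simp only [Pi.sub_apply, kron_row_mulVec, Matrix.one_mulVec]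

lemma Cmat_mulVec_eq_zero_iff (U : ℕ → Matrix (Fin D) (Fin D) ℂ) (j : Fin N)
    (w : Fin D × Fin (N+1) → ℂ) :
    Cmat D N U j *ᵥ w = 0 ↔
      (fun i => w (i, j.succ)) = (U (j.val + 1)) *ᵥ (fun i => w (i, j.castSucc)) := by
  constructor
  · intro h
    funext i
    have := congrFun h (i, 0)
    rw [Cmat_mulVec] at this
    simpa [sub_eq_zero] using this
  · intro h
    funext ⟨i, z⟩
    rw [Cmat_mulVec]
    have := congrFun h i
    simp only [Pi.zero_apply]
    rw [this]; ring

/-! ### Kernel characterization -/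

lemma ker_iff (U : ℕ → Matrix (Fin D) (Fin D) ℂ)
    (hU : ∀ j : Fin N, (U (j.val + 1))ᴴ * U (j.val + 1) = 1) (w : Fin D × Fin (N+1) → ℂ) :
    Hprop D N U *ᵥ w = 0 ↔
      ∃ α : Fin D → ℂ, w = fun p => ((prodU D U p.2.val) *ᵥ α) p.1 := by
  constructor
  · intro h
    -- quadratic form is zero, hence each Cmat kills w
    have hq : (((1/2 * ∑ j : Fin N, Qv (Cmat D N U j *ᵥ w) : ℝ)) : ℂ) = 0 := by
      rw [← quad_form U hU w, h, dotProduct_zero]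
    have hq' : ∑ j : Fin N, Qv (Cmat D N U j *ᵥ w) = 0 := by
      have h2 := Complex.ofReal_eq_zero.1 hq
      linarith
    have hCz : ∀ j : Fin N, Cmat D N U j *ᵥ w = 0 := by
      intro j
      have := (Finset.sum_eq_zero_iff_of_nonneg (fun j _ => Qv_nonneg _)).1 hq' j
        (Finset.mem_univ j)
      exact (Qv_eq_zero_iff _).1 this
    have hrel : ∀ j : Fin N, (fun i => w (i, j.succ)) =
        (U (j.val + 1)) *ᵥ (fun i => w (i, j.castSucc)) :=
      fun j => (Cmat_mulVec_eq_zero_iff U j w).1 (hCz j)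
    refine ⟨fun i => w (i, 0), ?_⟩
    have key : ∀ m (hm : m ≤ N),
        (fun i => w (i, ⟨m, by omega⟩)) = (prodU D U m) *ᵥ (fun i => w (i, 0)) := by
      intro m
      induction m with
      | zero => intro _; simp [prodU, Matrix.one_mulVec]
      | succ k ih =>
        intro hk
        have hk' : k < N := by omega
        have hj := hrel ⟨k, hk'⟩
        have hsucc : (⟨k, hk'⟩ : Fin N).succ = (⟨k+1, by omega⟩ : Fin (N+1)) := rfl
        have hcast : (⟨k, hk'⟩ : Fin N).castSucc = (⟨k, by omega⟩ : Fin (N+1)) := rfl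
        rw [hsucc, hcast] at hj
        rw [hj, ih (by omega), Matrix.mulVec_mulVec]
        rfl
    funext p
    obtain ⟨i, t⟩ := p
    have := congrFun (key t.val (by omega)) i
    simpa [Fin.eta] using this
  · rintro ⟨α, rfl⟩
    rw [Hprop_mulVec U hU]
    have hCz : ∀ j : Fin N, Cmat D N U j *ᵥ
        (fun p : Fin D × Fin (N+1) => ((prodU D U p.2.val) *ᵥ α) p.1) = 0 := by
      intro j
      rw [Cmat_mulVec_eq_zero_iff]
      have : (j.succ : Fin (N+1)).val = j.val + 1 := rfl
      funext i
      simp only [this, Fin.coe_castSucc, prodU, ← Matrix.mulVec_mulVec]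
    simp only [hCz, Matrix.mulVec_zero, Finset.sum_const_zero, smul_zero]

/-! ### Poincaré inequality on the path -/

section Poincare
variable {E : Type*} [NormedAddCommGroup E] [InnerProductSpace ℂ E]

open scoped InnerProductSpace

omit [InnerProductSpace ℂ E] in
lemma poincare_telescope (n : ℕ) (v : Fin (n+1) → E) (a b : Fin (n+1)) (hab : a.val ≤ b.val) :
    ‖v b - v a‖^2 ≤ (n:ℝ) * ∑ j : Fin n, ‖v j.succ - v j.castSucc‖^2 := by
  set V : ℕ → E := fun t => v ⟨min t n, by omega⟩ with hV
  set dd : ℕ → E := fun j => V (j+1) - V j with hdd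
  have hVb : V b.val = v b := by
    have hb := b.isLt
    simp only [hV]; congr 1
    exact Fin.ext (show min b.val n = b.val by omega)
  have hVa : V a.val = v a := by
    have ha := a.isLt
    simp only [hV]; congr 1
    exact Fin.ext (show min a.val n = a.val by omega)
  have htel : v b - v a = ∑ j ∈ Finset.Ico a.val b.val, dd j := by
    rw [Finset.sum_Ico_eq_sub _ hab, Finset.sum_range_sub, Finset.sum_range_sub, hVb, hVa]
    abel
  have hnorm : ‖v b - v a‖ ≤ ∑ j ∈ Finset.Ico a.val b.val, ‖dd j‖ := by
    rw [htel]; exact norm_sum_le _ _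
  have hsq : ‖v b - v a‖^2 ≤ (∑ j ∈ Finset.Ico a.val b.val, ‖dd j‖)^2 := by
    have := norm_nonneg (v b - v a)
    nlinarith [Finset.sum_nonneg (fun j (_ : j ∈ Finset.Ico a.val b.val) => norm_nonneg (dd j))]
  have hcs : (∑ j ∈ Finset.Ico a.val b.val, ‖dd j‖)^2 ≤
      ((Finset.Ico a.val b.val).card : ℝ) * ∑ j ∈ Finset.Ico a.val b.val, ‖dd j‖^2 :=
    sq_sum_le_card_mul_sum_sq
  have hsub : Finset.Ico a.val b.val ⊆ Finset.range n := by
    intro j hj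
    rw [Finset.mem_Ico] at hj
    rw [Finset.mem_range]
    have := b.isLt
    omega
  have hmono : ∑ j ∈ Finset.Ico a.val b.val, ‖dd j‖^2 ≤ ∑ j ∈ Finset.range n, ‖dd j‖^2 :=
    Finset.sum_le_sum_of_subset_of_nonneg hsub (fun _ _ _ => sq_nonneg _)
  have hcard : ((Finset.Ico a.val b.val).card : ℝ) ≤ (n : ℝ) := by
    rw [Nat.card_Ico]
    have := b.isLt
    exact_mod_cast by omega
  have hdd_eq : ∑ j ∈ Finset.range n, ‖dd j‖^2 = ∑ j : Fin n, ‖v j.succ - v j.castSucc‖^2 := by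
    rw [← Fin.sum_univ_eq_sum_range (fun j => ‖dd j‖^2)]
    refine Finset.sum_congr rfl fun j _ => ?_
    have hj := j.isLt
    have h1 : V (j.val+1) = v j.succ := by
      simp only [hV]; congr 1
      exact Fin.ext (show min (j.val+1) n = j.succ.val by simp only [Fin.val_succ]; omega)
    have h2 : V j.val = v j.castSucc := by
      simp only [hV]; congr 1
      exact Fin.ext (show min j.val n = j.castSucc.val by simp only [Fin.coe_castSucc]; omega)
    simp only [hdd, h1, h2]
  calc ‖v b - v a‖^2
      ≤ ((Finset.Ico a.val b.val).card : ℝ) * ∑ j ∈ Finset.Ico a.val b.val, ‖dd j‖^2 :=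
        le_trans hsq hcs
    _ ≤ (n : ℝ) * ∑ j ∈ Finset.range n, ‖dd j‖^2 := by
        apply mul_le_mul hcard hmono (Finset.sum_nonneg fun _ _ => sq_nonneg _) (by positivity)
    _ = (n : ℝ) * ∑ j : Fin n, ‖v j.succ - v j.castSucc‖^2 := by rw [hdd_eq]

lemma poincare (n : ℕ) (v : Fin (n+1) → E) (hsum : ∑ t, v t = 0) :
    2 * ((n:ℝ)+1) * ∑ t, ‖v t‖^2 ≤
      ((n:ℝ)+1)^2 * ((n:ℝ) * ∑ j : Fin n, ‖v j.succ - v j.castSucc‖^2) := by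
  have h1 : ∀ s t : Fin (n+1), ‖v t - v s‖^2
      = ‖v t‖^2 - 2 * RCLike.re (⟪v t, v s⟫_ℂ) + ‖v s‖^2 := fun s t => norm_sub_sq _ _
  have h2 : ∑ s : Fin (n+1), ∑ t : Fin (n+1), RCLike.re (⟪v t, v s⟫_ℂ) = 0 := by
    have h3 : ∀ s : Fin (n+1), ∑ t : Fin (n+1), RCLike.re (⟪v t, v s⟫_ℂ)
        = RCLike.re (⟪(0:E), v s⟫_ℂ) := by
      intro s
      rw [← hsum, sum_inner, map_sum]
    simp only [h3, inner_zero_left, map_zero, Finset.sum_const_zero]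
  have expand : ∑ s : Fin (n+1), ∑ t : Fin (n+1), ‖v t - v s‖^2
      = 2 * ((n:ℝ)+1) * ∑ t, ‖v t‖^2 := by
    calc ∑ s : Fin (n+1), ∑ t : Fin (n+1), ‖v t - v s‖^2
        = ∑ s : Fin (n+1), ∑ t : Fin (n+1),
            (‖v t‖^2 - 2 * RCLike.re (⟪v t, v s⟫_ℂ) + ‖v s‖^2) := by
          simp only [h1]
      _ = (∑ s : Fin (n+1), ∑ t : Fin (n+1), ‖v t‖^2)
            - 2 * (∑ s : Fin (n+1), ∑ t : Fin (n+1), RCLike.re (⟪v t, v s⟫_ℂ))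
            + ∑ s : Fin (n+1), ∑ t : Fin (n+1), ‖v s‖^2 := by
          simp only [Finset.sum_add_distrib, Finset.sum_sub_distrib, Finset.mul_sum]
      _ = 2 * ((n:ℝ)+1) * ∑ t, ‖v t‖^2 := by
          rw [h2]
          simp only [Finset.sum_const, Finset.card_univ, Fintype.card_fin, nsmul_eq_mul,
            mul_zero, sub_zero]
          push_cast
          rw [← Finset.mul_sum]
          ring
  have bound : ∑ s : Fin (n+1), ∑ t : Fin (n+1), ‖v t - v s‖^2
      ≤ ((n:ℝ)+1)^2 * ((n:ℝ) * ∑ j : Fin n, ‖v j.succ - v j.castSucc‖^2) := by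
    have hterm : ∀ s t : Fin (n+1), ‖v t - v s‖^2
        ≤ (n:ℝ) * ∑ j : Fin n, ‖v j.succ - v j.castSucc‖^2 := by
      intro s t
      rcases le_total s.val t.val with h | h
      · exact poincare_telescope n v s t h
      · rw [norm_sub_rev]
        exact poincare_telescope n v t s h
    calc ∑ s : Fin (n+1), ∑ t : Fin (n+1), ‖v t - v s‖^2
        ≤ ∑ _s : Fin (n+1), ∑ _t : Fin (n+1),
            ((n:ℝ) * ∑ j : Fin n, ‖v j.succ - v j.castSucc‖^2) :=
          Finset.sum_le_sum fun s _ => Finset.sum_le_sum fun t _ => hterm s t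
      _ = ((n:ℝ)+1)^2 * ((n:ℝ) * ∑ j : Fin n, ‖v j.succ - v j.castSucc‖^2) := by
          simp only [Finset.sum_const, Finset.card_univ, Fintype.card_fin, nsmul_eq_mul]
          push_cast
          ring
  linarith [expand ▸ bound]

end Poincare

lemma euclid_norm_sq (x : EuclideanSpace ℂ (Fin D)) : ‖x‖^2 = Qv (x : Fin D → ℂ) := by
  rw [EuclideanSpace.norm_eq, Real.sq_sqrt (Finset.sum_nonneg fun _ _ => sq_nonneg _)]
  simp [Qv, Complex.sq_norm]

lemma Qv_prod_fin1 (x : Fin D × Fin 1 → ℂ) : Qv x = Qv (fun i => x (i, 0)) := by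
  simp [Qv, Fintype.sum_prod_type]

/-! ### The spectral gap -/

lemma gap (U : ℕ → Matrix (Fin D) (Fin D) ℂ) (hN : 1 ≤ N)
    (hU : ∀ j, 1 ≤ j → j ≤ N → (U j)ᴴ * U j = 1 ∧ U j * (U j)ᴴ = 1)
    (r : ℝ) (hr : r ≠ 0) (w : Fin D × Fin (N+1) → ℂ) (hw0 : w ≠ 0)
    (heig : Hprop D N U *ᵥ w = (r : ℂ) • w) :
    1 / ((N:ℝ) * ((N:ℝ)+1)) ≤ r := by
  have hU' : ∀ j : Fin N, (U (j.val+1))ᴴ * U (j.val+1) = 1 :=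
    fun j => (hU (j.val+1) (by omega) j.isLt).1
  have hPu := prodU_unitary U hU
  set wt : Fin (N+1) → Fin D → ℂ := fun t i => w (i, t) with hwt
  set v : Fin (N+1) → Fin D → ℂ := fun t => (prodU D U t.val)ᴴ *ᵥ wt t with hv
  -- quadratic form identity
  have hq : ((r * Qv w : ℝ) : ℂ) = ((1/2 * ∑ j : Fin N, Qv (Cmat D N U j *ᵥ w) : ℝ) : ℂ) := by
    rw [← quad_form U hU' w, heig, dotProduct_smul, smul_eq_mul, star_dot_self]
    push_cast; ring
  have hq' : r * Qv w = 1/2 * ∑ j : Fin N, Qv (Cmat D N U j *ᵥ w) := by exact_mod_cast hq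
  -- differences
  have hdiff : ∀ j : Fin N, Qv (Cmat D N U j *ᵥ w)
      = Qv (fun i => v j.succ i - v j.castSucc i) := by
    intro j
    have hjN : j.val + 1 ≤ N := j.isLt
    have hP := hPu (j.val+1) hjN
    have hUj := hU (j.val+1) (by omega) hjN
    have hPU : (prodU D U (j.val+1))ᴴ * U (j.val+1) = (prodU D U j.val)ᴴ := by
      show ((U (j.val+1) * prodU D U j.val)ᴴ) * U (j.val+1) = _
      rw [Matrix.conjTranspose_mul, Matrix.mul_assoc, hUj.1, Matrix.mul_one]
    have hvec : (fun i => v j.succ i - v j.castSucc i)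
        = (prodU D U (j.val+1))ᴴ *ᵥ (fun i => (Cmat D N U j *ᵥ w) (i, 0)) := by
      have hx : (fun i => (Cmat D N U j *ᵥ w) (i, 0))
          = fun i => (wt j.succ i - (U (j.val+1) *ᵥ wt j.castSucc) i) := by
        funext i
        rw [Cmat_mulVec]
      rw [hx]
      have hsplit : (fun i => (wt j.succ i - (U (j.val+1) *ᵥ wt j.castSucc) i))
          = wt j.succ - U (j.val+1) *ᵥ wt j.castSucc := rfl
      rw [hsplit, Matrix.mulVec_sub]
      funext i
      have hcA : (prodU D U (j.val+1))ᴴ *ᵥ (U (j.val+1) *ᵥ wt j.castSucc)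
          = (prodU D U j.val)ᴴ *ᵥ wt j.castSucc := by
        rw [Matrix.mulVec_mulVec, hPU]
      rw [Pi.sub_apply, hcA]
      have hsv : v j.succ = (prodU D U (j.val+1))ᴴ *ᵥ wt j.succ := rfl
      have hcv : v j.castSucc = (prodU D U j.val)ᴴ *ᵥ wt j.castSucc := rfl
      rw [hsv, hcv]
    rw [Qv_prod_fin1, hvec, unitary_mulVec_Qv _ hP.2]
  -- orthogonality to the kernel
  have hdotk : ∀ α : Fin D → ℂ,
      star (fun p : Fin D × Fin (N+1) => ((prodU D U p.2.val) *ᵥ α) p.1) ⬝ᵥ w = 0 := by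
    intro α
    set k : Fin D × Fin (N+1) → ℂ := fun p => ((prodU D U p.2.val) *ᵥ α) p.1 with hk
    have hker : Hprop D N U *ᵥ k = 0 := (ker_iff U hU' k).2 ⟨α, rfl⟩
    have hH := Hprop_isHermitian U hU'
    have h1 : star k ⬝ᵥ (Hprop D N U *ᵥ w) = (r:ℂ) * (star k ⬝ᵥ w) := by
      rw [heig, dotProduct_smul, smul_eq_mul]
    have h2 : star k ⬝ᵥ (Hprop D N U *ᵥ w) = 0 := by
      rw [Matrix.dotProduct_mulVec]
      have h3 : star k ᵥ* Hprop D N U = 0 := by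
        rw [← hH, ← Matrix.star_mulVec, hker, star_zero]
      rw [h3, zero_dotProduct]
    have hrC : (r : ℂ) ≠ 0 := Complex.ofReal_ne_zero.2 hr
    exact (mul_eq_zero.1 (h1.symm.trans h2)).resolve_left hrC
  have hsumv : ∑ t, v t = 0 := by
    have hall : ∀ α : Fin D → ℂ, star α ⬝ᵥ (∑ t, v t) = 0 := by
      intro α
      calc star α ⬝ᵥ (∑ t, v t) = ∑ t : Fin (N+1), star α ⬝ᵥ v t := dotProduct_sum _ _ _
        _ = ∑ t : Fin (N+1), star ((prodU D U t.val) *ᵥ α) ⬝ᵥ wt t := by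
            refine Finset.sum_congr rfl fun t _ => ?_
            rw [show v t = (prodU D U t.val)ᴴ *ᵥ wt t from rfl,
              Matrix.dotProduct_mulVec, ← Matrix.star_mulVec]
        _ = star (fun p : Fin D × Fin (N+1) => ((prodU D U p.2.val) *ᵥ α) p.1) ⬝ᵥ w := by
            simp only [dotProduct, Fintype.sum_prod_type, Pi.star_apply]
            exact (Finset.sum_comm).symm
        _ = 0 := hdotk α
    have hs := hall (∑ t, v t)
    rw [star_dot_self] at hs
    exact (Qv_eq_zero_iff _).1 (by exact_mod_cast hs)
  -- total norm
  have htot : ∑ t : Fin (N+1), Qv (v t) = Qv w := by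
    have h1 : ∀ t : Fin (N+1), Qv (v t) = Qv (wt t) := fun t =>
      unitary_mulVec_Qv _ (hPu t.val (by have := t.isLt; omega)).2 _
    simp only [h1]
    calc ∑ t : Fin (N+1), Qv (wt t)
        = ∑ t : Fin (N+1), ∑ i : Fin D, Complex.normSq (w (i, t)) := rfl
      _ = ∑ i : Fin D, ∑ t : Fin (N+1), Complex.normSq (w (i, t)) := Finset.sum_comm
      _ = Qv w := by rw [Qv, Fintype.sum_prod_type]
  -- Poincaré
  set VE : Fin (N+1) → EuclideanSpace ℂ (Fin D) := fun t => WithLp.toLp 2 (v t) with hVE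
  have hsumVE : ∑ t, VE t = 0 := by rw [hVE, ← WithLp.toLp_sum, hsumv]; rfl
  have hpo := poincare N VE hsumVE
  have hnv : ∀ t : Fin (N+1), ‖VE t‖^2 = Qv (v t) := fun t => euclid_norm_sq _
  have hnd : ∀ j : Fin N, ‖VE j.succ - VE j.castSucc‖^2 = Qv (Cmat D N U j *ᵥ w) := by
    intro j
    rw [euclid_norm_sq, hdiff j]
    rfl
  rw [Finset.sum_congr rfl (fun t _ => hnv t), Finset.sum_congr rfl (fun j _ => hnd j),
    htot] at hpo
  -- conclude
  have hQw : 0 < Qv w := by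
    rcases lt_or_eq_of_le (Qv_nonneg w) with h | h
    · exact h
    · exact absurd ((Qv_eq_zero_iff w).1 h.symm) hw0
  have hsum2 : ∑ j : Fin N, Qv (Cmat D N U j *ᵥ w) = 2 * (r * Qv w) := by linarith
  rw [hsum2] at hpo
  have hN1 : (1:ℝ) ≤ (N:ℝ) := by exact_mod_cast hN
  have h5 : (2*((N:ℝ)+1)*Qv w) * 1 ≤ (2*((N:ℝ)+1)*Qv w) * ((N:ℝ)*((N:ℝ)+1)*r) := by
    have hE : ((N:ℝ)+1)^2 * ((N:ℝ) * (2 * (r * Qv w)))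
        = (2*((N:ℝ)+1)*Qv w) * ((N:ℝ)*((N:ℝ)+1)*r) := by ring
    rw [mul_one]
    calc 2*((N:ℝ)+1)*Qv w = 2 * ((N:ℝ)+1) * Qv w := by ring
      _ ≤ ((N:ℝ)+1)^2 * ((N:ℝ) * (2 * (r * Qv w))) := hpo
      _ = (2*((N:ℝ)+1)*Qv w) * ((N:ℝ)*((N:ℝ)+1)*r) := hE
  have hkey : 1 ≤ (N:ℝ)*((N:ℝ)+1)*r :=
    le_of_mul_le_mul_left h5 (by positivity)
  rw [div_le_iff₀ (by positivity)]
  calc (1:ℝ) ≤ (N:ℝ)*((N:ℝ)+1)*r := hkey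
    _ = r * ((N:ℝ)*((N:ℝ)+1)) := by ring

end Stmt8Aux


theorem stmt_8 :
    (∀ (D N : ℕ) (U : ℕ → Matrix (Fin D) (Fin D) ℂ), 1 ≤ D → 1 ≤ N →
      (∀ j, 1 ≤ j → j ≤ N → (U j)ᴴ * U j = 1 ∧ U j * (U j)ᴴ = 1) →
      (∀ j, 1 ≤ j → j ≤ N → j % 2 = 0 → U j = 1) →
      ∀ w : Fin D × Fin (N + 1) → ℂ,
        (Hprop D N U).mulVec w = 0 ↔
          ∃ α : Fin D → ℂ, w = fun p => ((prodU D U p.2.val).mulVec α) p.1) ∧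
    (∃ c : ℝ, 0 < c ∧
      ∀ (D N : ℕ) (U : ℕ → Matrix (Fin D) (Fin D) ℂ), 1 ≤ D → 1 ≤ N →
        (∀ j, 1 ≤ j → j ≤ N → (U j)ᴴ * U j = 1 ∧ U j * (U j)ᴴ = 1) →
        (∀ j, 1 ≤ j → j ≤ N → j % 2 = 0 → U j = 1) →
        gammaM (Hprop D N U) ≥ c / (N : ℝ) ^ 2) := by
  constructor
  · intro D N U _ _ hU _ w
    exact Stmt8Aux.ker_iff U (fun j => (hU (j.val+1) (by omega) j.isLt).1) w
  · refine ⟨1/2, by norm_num, ?_⟩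
    intro D N U hD hN hU _
    have hU' : ∀ j : Fin N, (U (j.val+1))ᴴ * U (j.val+1) = 1 :=
      fun j => (hU (j.val+1) (by omega) j.isLt).1
    have hH := Stmt8Aux.Hprop_isHermitian U hU'
    -- the Hamiltonian is nonzero
    have hne0 : Hprop D N U ≠ 0 := by
      intro h0
      set e : Fin D × Fin (N+1) → ℂ := fun p => if p = (⟨0, hD⟩, 0) then 1 else 0 with he
      have hez : Hprop D N U *ᵥ e = 0 := by rw [h0, Matrix.zero_mulVec]
      obtain ⟨α, hα⟩ := (Stmt8Aux.ker_iff U hU' e).1 hez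
      have hα0 : α = 0 := by
        have h1 : U 1 *ᵥ α = 0 := by
          funext i
          have h2 := congrFun hα (i, (⟨1, by omega⟩ : Fin (N+1)))
          have h3 : e (i, (⟨1, by omega⟩ : Fin (N+1))) = 0 := by
            rw [he]
            simp only [ite_eq_right_iff]
            intro hcontr
            exact absurd (congrArg (fun p => (Prod.snd p).val) hcontr) (by simp)
          rw [h3] at h2
          have h4 : (prodU D U 1) *ᵥ α = U 1 *ᵥ α := by
            show (U 1 * prodU D U 0) *ᵥ α = _
            show (U 1 * 1) *ᵥ α = _
            rw [Matrix.mul_one]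
          rw [← h4]
          exact h2.symm
        have h5 := congrArg (fun x => (U 1)ᴴ *ᵥ x) h1
        simpa [Matrix.mulVec_mulVec, (hU 1 le_rfl hN).1, Matrix.one_mulVec,
          Matrix.mulVec_zero] using h5
      have h6 := congrFun hα (⟨0, hD⟩, (0 : Fin (N+1)))
      rw [he] at h6
      simp only [if_pos rfl] at h6
      rw [hα0] at h6
      simp only [Matrix.mulVec_zero, Pi.zero_apply] at h6
      exact one_ne_zero h6
    obtain ⟨v0, t0, ht0, hv0, heig0⟩ := hH.exists_eigenvector_of_ne_zero hne0
    have heig0' : (Hprop D N U).mulVec v0 = (t0 : ℂ) • v0 := by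
      rw [heig0]
      funext i
      simp [Complex.real_smul]
    -- bound the infimum
    have hbound : ∀ r ∈ {r : ℝ | r ≠ 0 ∧ ∃ w : Fin D × Fin (N+1) → ℂ, w ≠ 0 ∧
        (Hprop D N U).mulVec w = (r : ℂ) • w}, 1 / ((N:ℝ) * ((N:ℝ)+1)) ≤ r := by
      rintro r ⟨hr, w, hw0, heig⟩
      exact Stmt8Aux.gap U hN hU r hr w hw0 heig
    have hne : {r : ℝ | r ≠ 0 ∧ ∃ w : Fin D × Fin (N+1) → ℂ, w ≠ 0 ∧
        (Hprop D N U).mulVec w = (r : ℂ) • w}.Nonempty := ⟨t0, ht0, v0, hv0, heig0'⟩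
    have hinf : 1 / ((N:ℝ) * ((N:ℝ)+1)) ≤ gammaM (Hprop D N U) :=
      le_csInf hne hbound
    have hN1 : (1:ℝ) ≤ (N:ℝ) := by exact_mod_cast hN
    have hfinal : (1/2 : ℝ) / (N:ℝ)^2 ≤ 1 / ((N:ℝ) * ((N:ℝ)+1)) := by
      rw [div_le_div_iff₀ (by positivity) (by positivity)]
      nlinarith
    exact le_trans hfinal hinf
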